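/- Let P be a transition function, r : 𝒮 × 𝒜 → ℝ a reward vector, and λ > 0. Then strong duality holds for the regularized reinforcement learning problem: max_{d ∈ C(P)} ( Σ_{s,a} r(s,a) d(s,a) − (λ/2)‖d‖₂² ) = min_{h : 𝒮 → ℝ} max_{d ≥ 0} L_{r,P,λ}(d,h), and both the maximum on the left and the minimum on the right are attained. -/

import Mathlib

noncomputable section

open scoped BigOperators

def IsTransition {S A : Type*} [Fintype S] [Fintype A]
    (P : EuclideanSpace ℝ (S × A × S)) : Prop :=
  (∀ s a s', 0 ≤ P (s, a, s')) ∧ ∀ s a, (∑ s', P (s, a, s')) = 1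

def Feasible {S A : Type*} [Fintype S] [Fintype A] (γ : ℝ) (ρ : S → ℝ)
    (P : EuclideanSpace ℝ (S × A × S)) (d : EuclideanSpace ℝ (S × A)) : Prop :=
  (∀ s a, 0 ≤ d (s, a)) ∧
  ∀ s : S, (∑ a, d (s, a)) = ρ s + γ * ∑ s', ∑ a, d (s', a) * P (s', a, s)

/-- The regularized objective `∑_{s,a} r(s,a) d(s,a) − (λ/2) ‖d‖₂²`. -/
def RegObj {S A : Type*} [Fintype S] [Fintype A] (lam : ℝ)
    (r d : EuclideanSpace ℝ (S × A)) : ℝ :=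
  (∑ p : S × A, r p * d p) - lam / 2 * ‖d‖ ^ 2

/-- The Lagrangian `L_{r,P,λ}(d,h)` of the regularized RL problem. -/
def Lag {S A : Type*} [Fintype S] [Fintype A] (γ : ℝ) (ρ : S → ℝ)
    (r : EuclideanSpace ℝ (S × A)) (P : EuclideanSpace ℝ (S × A × S)) (lam : ℝ)
    (d : EuclideanSpace ℝ (S × A)) (h : EuclideanSpace ℝ S) : ℝ :=
  (∑ p : S × A, r p * d p) - lam / 2 * ‖d‖ ^ 2 +
    ∑ s, h s * (ρ s + γ * (∑ s', ∑ a, d (s', a) * P (s', a, s)) - ∑ a, d (s, a))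

/-- The dual function `h ↦ max_{d ≥ 0} L_{r,P,λ}(d,h)`. -/
def DualFn {S A : Type*} [Fintype S] [Fintype A] (γ : ℝ) (ρ : S → ℝ)
    (r : EuclideanSpace ℝ (S × A)) (P : EuclideanSpace ℝ (S × A × S)) (lam : ℝ)
    (h : EuclideanSpace ℝ S) : ℝ :=
  ⨆ d : {d : EuclideanSpace ℝ (S × A) // ∀ p, 0 ≤ d p}, Lag γ ρ r P lam d.1 h

section Aux
variable {S A : Type*} [Fintype S] [Fintype A]

lemma norm_sq_eq_sum (d : EuclideanSpace ℝ (S × A)) : ‖d‖ ^ 2 = ∑ p, (d p) ^ 2 := by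
  rw [EuclideanSpace.norm_eq, Real.sq_sqrt (by positivity)]
  simp [sq_abs]

/-- The reduced cost vector `c_h(p) = r p + γ (P h)(p) − h p.1`. -/
def cvec (γ : ℝ) (P : EuclideanSpace ℝ (S × A × S)) (r : EuclideanSpace ℝ (S × A))
    (h : EuclideanSpace ℝ S) (p : S × A) : ℝ :=
  r p + γ * (∑ s, P (p.1, p.2, s) * h s) - h p.1

lemma gamma_part (γ : ℝ) (P : EuclideanSpace ℝ (S × A × S))
    (d : EuclideanSpace ℝ (S × A)) (h : EuclideanSpace ℝ S) :
    ∑ s, h s * (γ * (∑ s', ∑ a, d (s', a) * P (s', a, s)))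
      = ∑ p : S × A, (γ * ∑ s, P (p.1, p.2, s) * h s) * d p := by
  rw [Fintype.sum_prod_type]
  simp only [Finset.mul_sum]
  rw [Finset.sum_comm]
  apply Finset.sum_congr rfl; intro s' _
  rw [Finset.sum_comm]
  apply Finset.sum_congr rfl; intro a _
  simp only [Finset.sum_mul]
  apply Finset.sum_congr rfl; intro s _
  ring

lemma Lag_eq (γ : ℝ) (ρ : S → ℝ) (r : EuclideanSpace ℝ (S × A))
    (P : EuclideanSpace ℝ (S × A × S)) (lam : ℝ)
    (d : EuclideanSpace ℝ (S × A)) (h : EuclideanSpace ℝ S) :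
    Lag γ ρ r P lam d h =
      (∑ p : S × A, cvec γ P r h p * d p) - lam / 2 * ‖d‖ ^ 2 + ∑ s, h s * ρ s := by
  unfold Lag cvec
  have split : ∑ p : S × A, (r p + γ * (∑ s, P (p.1, p.2, s) * h s) - h p.1) * d p
      = ∑ p : S × A, r p * d p
        + ((∑ p : S × A, (γ * ∑ s, P (p.1, p.2, s) * h s) * d p)
          - ∑ p : S × A, h p.1 * d p) := by
    rw [← Finset.sum_sub_distrib, ← Finset.sum_add_distrib]
    apply Finset.sum_congr rfl; intro p _; ring
  have hsum : ∑ s, h s * (ρ s + γ * (∑ s', ∑ a, d (s', a) * P (s', a, s)) - ∑ a, d (s, a))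
      = ∑ s, h s * ρ s + ((∑ s, h s * (γ * (∑ s', ∑ a, d (s', a) * P (s', a, s))))
          - ∑ s, h s * ∑ a, d (s, a)) := by
    rw [← Finset.sum_sub_distrib, ← Finset.sum_add_distrib]
    apply Finset.sum_congr rfl; intro s _
    ring
  have hd : ∑ p : S × A, h p.1 * d p = ∑ s, h s * ∑ a, d (s, a) := by
    rw [Fintype.sum_prod_type]
    simp [Finset.mul_sum]
  rw [split, hsum, gamma_part, hd]
  ring

lemma Lag_of_feasible (γ : ℝ) (ρ : S → ℝ) (r : EuclideanSpace ℝ (S × A))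
    (P : EuclideanSpace ℝ (S × A × S)) (lam : ℝ)
    {d : EuclideanSpace ℝ (S × A)} (hd : Feasible γ ρ P d) (h : EuclideanSpace ℝ S) :
    Lag γ ρ r P lam d h = RegObj lam r d := by
  unfold Lag RegObj
  have : ∀ s, h s * (ρ s + γ * (∑ s', ∑ a, d (s', a) * P (s', a, s)) - ∑ a, d (s, a)) = 0 := by
    intro s; rw [hd.2 s]; ring
  rw [Finset.sum_congr rfl (fun s _ => this s), Finset.sum_const_zero]
  ring

/-- Pairing identity obtained from the two Lagrangian forms. -/
lemma pairing (γ : ℝ) (ρ : S → ℝ) (r : EuclideanSpace ℝ (S × A))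
    (P : EuclideanSpace ℝ (S × A × S)) (lam : ℝ)
    {d : EuclideanSpace ℝ (S × A)} (hd : Feasible γ ρ P d) (h : EuclideanSpace ℝ S) :
    ∑ p : S × A, cvec γ P r h p * d p = ∑ p : S × A, r p * d p - ∑ s, h s * ρ s := by
  have h1 := Lag_eq γ ρ r P lam d h
  rw [Lag_of_feasible γ ρ r P lam hd h] at h1
  unfold RegObj at h1
  linarith

end Aux
section Aux2
variable {S A : Type*} [Fintype S] [Fintype A]

lemma quad_le {lam : ℝ} (hlam : 0 < lam) (c t : ℝ) (ht : 0 ≤ t) :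
    c * t - lam / 2 * t ^ 2 ≤ max 0 c ^ 2 / (2 * lam) := by
  rcases le_total c 0 with hc | hc
  · rw [max_eq_left hc]
    have h1 : c * t ≤ 0 := mul_nonpos_of_nonpos_of_nonneg hc ht
    have h2 : (0:ℝ) ^ 2 / (2 * lam) = 0 := by simp
    rw [h2]
    nlinarith [sq_nonneg t]
  · rw [max_eq_right hc]
    have h := sq_nonneg (lam * t - c)
    have hl2 : 0 < 2 * lam := by linarith
    rw [le_div_iff₀ hl2]
    nlinarith

lemma quad_eq_of_cs {lam : ℝ} (hlam : 0 < lam) {c t : ℝ}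
    (hcs : (t = 0 ∧ c ≤ 0) ∨ c = lam * t) (ht : 0 ≤ t) :
    c * t - lam / 2 * t ^ 2 = max 0 c ^ 2 / (2 * lam) := by
  rcases hcs with ⟨h0, hc⟩ | hc
  · rw [h0, max_eq_left hc]; ring
  · subst hc
    rw [max_eq_right (by positivity)]
    field_simp
    ring

lemma Lag_le_bound (γ : ℝ) (ρ : S → ℝ) (r : EuclideanSpace ℝ (S × A))
    (P : EuclideanSpace ℝ (S × A × S)) {lam : ℝ} (hlam : 0 < lam)
    (h : EuclideanSpace ℝ S) (d : EuclideanSpace ℝ (S × A)) (hd : ∀ p, 0 ≤ d p) :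
    Lag γ ρ r P lam d h
      ≤ (∑ p : S × A, max 0 (cvec γ P r h p) ^ 2 / (2 * lam)) + ∑ s, h s * ρ s := by
  rw [Lag_eq, norm_sq_eq_sum]
  have : (∑ p : S × A, cvec γ P r h p * d p) - lam / 2 * ∑ p, (d p) ^ 2
      = ∑ p : S × A, (cvec γ P r h p * d p - lam / 2 * (d p) ^ 2) := by
    rw [Finset.sum_sub_distrib, Finset.mul_sum]
  rw [this]
  have hb := Finset.sum_le_sum (fun p (_ : p ∈ Finset.univ) =>
    quad_le hlam (cvec γ P r h p) (d p) (hd p))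
  linarith

lemma bddAbove_lag (γ : ℝ) (ρ : S → ℝ) (r : EuclideanSpace ℝ (S × A))
    (P : EuclideanSpace ℝ (S × A × S)) {lam : ℝ} (hlam : 0 < lam)
    (h : EuclideanSpace ℝ S) :
    BddAbove (Set.range fun d : {d : EuclideanSpace ℝ (S × A) // ∀ p, 0 ≤ d p} =>
      Lag γ ρ r P lam d.1 h) := by
  refine ⟨(∑ p : S × A, max 0 (cvec γ P r h p) ^ 2 / (2 * lam)) + ∑ s, h s * ρ s, ?_⟩
  rintro x ⟨d, rfl⟩
  exact Lag_le_bound γ ρ r P hlam h d.1 d.2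

lemma regObj_le_dualFn (γ : ℝ) (ρ : S → ℝ) (r : EuclideanSpace ℝ (S × A))
    (P : EuclideanSpace ℝ (S × A × S)) {lam : ℝ} (hlam : 0 < lam)
    {d : EuclideanSpace ℝ (S × A)} (hd : Feasible γ ρ P d) (h : EuclideanSpace ℝ S) :
    RegObj lam r d ≤ DualFn γ ρ r P lam h := by
  have hnn : ∀ p : S × A, 0 ≤ d p := fun p => hd.1 p.1 p.2
  have := le_ciSup (bddAbove_lag γ ρ r P hlam h) (⟨d, hnn⟩ :
    {d : EuclideanSpace ℝ (S × A) // ∀ p, 0 ≤ d p})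
  rw [Lag_of_feasible γ ρ r P lam hd h] at this
  exact this

end Aux2
section Occ
variable {S A : Type*} [Fintype S] [Fintype A] [DecidableEq A]

def occSeq (γ : ℝ) (ρ : S → ℝ) (P : EuclideanSpace ℝ (S × A × S)) (π : S → A) :
    ℕ → S → ℝ
  | 0 => ρ
  | n + 1 => fun s => γ * ∑ s', occSeq γ ρ P π n s' * P (s', π s', s)

variable {γ : ℝ} {ρ : S → ℝ} {P : EuclideanSpace ℝ (S × A × S)} {π : S → A}

lemma occSeq_nonneg (hγ0 : 0 ≤ γ) (hρ0 : ∀ s, 0 ≤ ρ s) (hP : IsTransition P) :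
    ∀ n s, 0 ≤ occSeq γ ρ P π n s := by
  intro n
  induction n with
  | zero => exact hρ0
  | succ n ih =>
    intro s
    apply mul_nonneg hγ0
    apply Finset.sum_nonneg
    intro s' _
    exact mul_nonneg (ih s') (hP.1 s' (π s') s)

lemma occSeq_sum (hρ1 : (∑ s, ρ s) = 1) (hP : IsTransition P) :
    ∀ n, (∑ s, occSeq γ ρ P π n s) = γ ^ n := by
  intro n
  induction n with
  | zero => simpa [occSeq] using hρ1
  | succ n ih =>
    show (∑ s, γ * ∑ s', occSeq γ ρ P π n s' * P (s', π s', s)) = γ ^ (n + 1)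
    rw [← Finset.mul_sum, Finset.sum_comm]
    have : ∀ s', (∑ s, occSeq γ ρ P π n s' * P (s', π s', s)) = occSeq γ ρ P π n s' := by
      intro s'
      rw [← Finset.mul_sum, hP.2 s' (π s'), mul_one]
    rw [Finset.sum_congr rfl (fun s' _ => this s'), ih]
    ring

lemma occSeq_summable (hγ0 : 0 ≤ γ) (hγ1 : γ < 1) (hρ0 : ∀ s, 0 ≤ ρ s)
    (hρ1 : (∑ s, ρ s) = 1) (hP : IsTransition P) (s : S) :
    Summable (fun n => occSeq γ ρ P π n s) := by
  apply Summable.of_nonneg_of_le (fun n => occSeq_nonneg hγ0 hρ0 hP n s)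
    (fun n => ?_) (summable_geometric_of_lt_one hγ0 hγ1)
  calc occSeq γ ρ P π n s ≤ ∑ s', occSeq γ ρ P π n s' :=
        Finset.single_le_sum (fun s' _ => occSeq_nonneg hγ0 hρ0 hP n s') (Finset.mem_univ s)
    _ = γ ^ n := occSeq_sum hρ1 hP n

/-- The discounted state-occupancy measure of the deterministic policy `π`. -/
def occMu (γ : ℝ) (ρ : S → ℝ) (P : EuclideanSpace ℝ (S × A × S)) (π : S → A) (s : S) : ℝ :=
  ∑' n, occSeq γ ρ P π n s

/-- The occupancy measure (over state-action pairs) of the deterministic policy `π`. -/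
def occD (γ : ℝ) (ρ : S → ℝ) (P : EuclideanSpace ℝ (S × A × S)) (π : S → A) :
    EuclideanSpace ℝ (S × A) :=
  WithLp.toLp 2 (fun p : S × A => if p.2 = π p.1 then occMu γ ρ P π p.1 else 0)

lemma occD_feasible (hγ0 : 0 ≤ γ) (hγ1 : γ < 1) (hρ0 : ∀ s, 0 ≤ ρ s)
    (hρ1 : (∑ s, ρ s) = 1) (hP : IsTransition P) :
    Feasible γ ρ P (occD γ ρ P π) := by
  have hsum := occSeq_summable (π := π) hγ0 hγ1 hρ0 hρ1 hP
  have hmu0 : ∀ s, 0 ≤ occMu γ ρ P π s := fun s =>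
    tsum_nonneg (fun n => occSeq_nonneg hγ0 hρ0 hP n s)
  have hfix : ∀ s, occMu γ ρ P π s
      = ρ s + γ * ∑ s', occMu γ ρ P π s' * P (s', π s', s) := by
    intro s
    have h0 : occMu γ ρ P π s = occSeq γ ρ P π 0 s + ∑' n, occSeq γ ρ P π (n + 1) s :=
      (hsum s).tsum_eq_zero_add
    rw [h0]
    show ρ s + (∑' n, γ * ∑ s', occSeq γ ρ P π n s' * P (s', π s', s)) = _
    congr 1
    rw [tsum_mul_left]
    congr 1
    rw [Summable.tsum_finsetSum (fun s' _ => ((hsum s').mul_right _))]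
    apply Finset.sum_congr rfl
    intro s' _
    rw [tsum_mul_right]
    rfl
  constructor
  · intro s a
    unfold occD
    dsimp only
    split
    · exact hmu0 s
    · exact le_refl 0
  · intro s
    have h1 : (∑ a, occD γ ρ P π (s, a)) = occMu γ ρ P π s := by
      unfold occD
      simp
    have h2 : ∀ s', (∑ a, occD γ ρ P π (s', a) * P (s', a, s))
        = occMu γ ρ P π s' * P (s', π s', s) := by
      intro s'
      unfold occD
      simp [ite_mul]
    rw [h1, Finset.sum_congr rfl (fun s' _ => h2 s')]
    exact hfix s

end Occ
section Compact
variable {S A : Type*} [Fintype S] [Fintype A]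
variable {γ : ℝ} {ρ : S → ℝ} {P : EuclideanSpace ℝ (S × A × S)}

lemma continuous_eval (p : S × A) :
    Continuous fun d : EuclideanSpace ℝ (S × A) => d p :=
  (continuous_apply p).comp (PiLp.continuous_ofLp (p := 2) (β := fun _ : S × A => ℝ))

lemma feasible_total_sum (hγ1 : γ < 1) (hρ1 : (∑ s, ρ s) = 1) (hP : IsTransition P)
    {d : EuclideanSpace ℝ (S × A)} (hd : Feasible γ ρ P d) :
    (∑ p : S × A, d p) = 1 / (1 - γ) := by
  have swap : (∑ s, ∑ s', ∑ a, d (s', a) * P (s', a, s)) = ∑ s', ∑ a, d (s', a) := by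
    rw [Finset.sum_comm]
    apply Finset.sum_congr rfl; intro s' _
    rw [Finset.sum_comm]
    apply Finset.sum_congr rfl; intro a _
    rw [← Finset.mul_sum, hP.2 s' a, mul_one]
  have key : (∑ p : S × A, d p) = 1 + γ * ∑ p : S × A, d p := by
    calc (∑ p : S × A, d p) = ∑ s, ∑ a, d (s, a) := Fintype.sum_prod_type _
      _ = ∑ s, (ρ s + γ * ∑ s', ∑ a, d (s', a) * P (s', a, s)) :=
          Finset.sum_congr rfl (fun s _ => hd.2 s)
      _ = 1 + γ * ∑ s, ∑ s', ∑ a, d (s', a) * P (s', a, s) := by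
          rw [Finset.sum_add_distrib, hρ1, ← Finset.mul_sum]
      _ = 1 + γ * ∑ s', ∑ a, d (s', a) := by rw [swap]
      _ = 1 + γ * ∑ p : S × A, d p := by rw [← Fintype.sum_prod_type]
  have h1γ : 1 - γ ≠ 0 := by linarith
  field_simp
  linarith [key]

lemma feasible_norm_le (hγ0 : 0 ≤ γ) (hγ1 : γ < 1) (hρ1 : (∑ s, ρ s) = 1)
    (hP : IsTransition P) {d : EuclideanSpace ℝ (S × A)} (hd : Feasible γ ρ P d) :
    ‖d‖ ≤ 1 / (1 - γ) := by
  have hnn : ∀ p : S × A, 0 ≤ d p := fun p => hd.1 p.1 p.2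
  have htot := feasible_total_sum hγ1 hρ1 hP hd
  have hsq : ‖d‖ ^ 2 ≤ (1 / (1 - γ)) ^ 2 := by
    rw [norm_sq_eq_sum, ← htot]
    calc (∑ p, (d p) ^ 2) ≤ ∑ p : S × A, d p * ∑ q : S × A, d q := by
          apply Finset.sum_le_sum
          intro p _
          rw [sq]
          exact mul_le_mul_of_nonneg_left
            (Finset.single_le_sum (fun q _ => hnn q) (Finset.mem_univ p)) (hnn p)
      _ = (∑ p : S × A, d p) ^ 2 := by rw [← Finset.sum_mul, sq]
  have hγ' : (0:ℝ) < 1 - γ := by linarith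
  have hB : (0:ℝ) ≤ 1 / (1 - γ) := by positivity
  nlinarith [norm_nonneg d]

lemma feasible_isCompact (γ : ℝ) (hγ0 : 0 ≤ γ) (hγ1 : γ < 1) (ρ : S → ℝ)
    (hρ1 : (∑ s, ρ s) = 1) (P : EuclideanSpace ℝ (S × A × S)) (hP : IsTransition P) :
    IsCompact {d : EuclideanSpace ℝ (S × A) | Feasible γ ρ P d} := by
  apply Metric.isCompact_of_isClosed_isBounded
  · have h1 : IsClosed {d : EuclideanSpace ℝ (S × A) | ∀ s a, 0 ≤ d (s, a)} := by
      have : {d : EuclideanSpace ℝ (S × A) | ∀ s a, 0 ≤ d (s, a)}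
          = ⋂ s, ⋂ a, {d : EuclideanSpace ℝ (S × A) | 0 ≤ d (s, a)} := by
        ext d; simp
      rw [this]
      exact isClosed_iInter fun s => isClosed_iInter fun a =>
        isClosed_le continuous_const (continuous_eval (s, a))
    have h2 : IsClosed {d : EuclideanSpace ℝ (S × A) |
        ∀ s : S, (∑ a, d (s, a)) = ρ s + γ * ∑ s', ∑ a, d (s', a) * P (s', a, s)} := by
      have : {d : EuclideanSpace ℝ (S × A) |
          ∀ s : S, (∑ a, d (s, a)) = ρ s + γ * ∑ s', ∑ a, d (s', a) * P (s', a, s)}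
          = ⋂ s, {d : EuclideanSpace ℝ (S × A) |
            (∑ a, d (s, a)) = ρ s + γ * ∑ s', ∑ a, d (s', a) * P (s', a, s)} := by
        ext d; simp
      rw [this]
      refine isClosed_iInter fun s => isClosed_eq ?_ ?_
      · exact continuous_finset_sum _ fun a _ => continuous_eval (s, a)
      · exact continuous_const.add (continuous_const.mul
          (continuous_finset_sum _ fun s' _ => continuous_finset_sum _ fun a _ =>
            (continuous_eval (s', a)).mul continuous_const))
    exact h1.inter h2
  · apply Bornology.IsBounded.subset (Metric.isBounded_closedBall
      (x := (0 : EuclideanSpace ℝ (S × A))) (r := 1 / (1 - γ)))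
    intro d hd
    simp only [Metric.mem_closedBall, dist_zero_right]
    exact feasible_norm_le hγ0 hγ1 hρ1 hP hd

lemma regObj_continuous (lam : ℝ) (r : EuclideanSpace ℝ (S × A)) :
    Continuous fun d : EuclideanSpace ℝ (S × A) => RegObj lam r d := by
  unfold RegObj
  apply Continuous.sub
  · exact continuous_finset_sum _ fun p _ => continuous_const.mul (continuous_eval p)
  · exact continuous_const.mul ((continuous_norm).pow 2)

end Compact
section Bellman
variable {S A : Type*} [Fintype S] [Fintype A] [Nonempty A]

/-- Q-value `q(s,a) = r'(s,a) + γ ∑_{s'} P(s,a,s') h(s')`. -/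
def qval (γ : ℝ) (P : EuclideanSpace ℝ (S × A × S)) (r' : S × A → ℝ) (h : S → ℝ)
    (s : S) (a : A) : ℝ :=
  r' (s, a) + γ * ∑ s', P (s, a, s') * h s'

/-- Bellman optimality operator. -/
def bellman (γ : ℝ) (P : EuclideanSpace ℝ (S × A × S)) (r' : S × A → ℝ) (h : S → ℝ) :
    S → ℝ :=
  fun s => Finset.univ.sup' Finset.univ_nonempty (qval γ P r' h s)

lemma qval_le_bellman (γ : ℝ) (P : EuclideanSpace ℝ (S × A × S)) (r' : S × A → ℝ)
    (h : S → ℝ) (s : S) (a : A) : qval γ P r' h s a ≤ bellman γ P r' h s :=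
  Finset.le_sup' _ (Finset.mem_univ a)

lemma exists_bellman_argmax (γ : ℝ) (P : EuclideanSpace ℝ (S × A × S)) (r' : S × A → ℝ)
    (h : S → ℝ) (s : S) : ∃ a, bellman γ P r' h s = qval γ P r' h s a := by
  obtain ⟨a, _, ha⟩ := Finset.exists_mem_eq_sup' (Finset.univ_nonempty (α := A))
    (qval γ P r' h s)
  exact ⟨a, ha⟩

lemma bellman_lipschitz (γ : ℝ) (hγ0 : 0 ≤ γ) (P : EuclideanSpace ℝ (S × A × S))
    (hP : IsTransition P) (r' : S × A → ℝ) :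
    LipschitzWith ⟨γ, hγ0⟩ (bellman γ P r') := by
  apply LipschitzWith.of_dist_le_mul
  intro h h'
  have hKd : (0:ℝ) ≤ γ * dist h h' := mul_nonneg hγ0 dist_nonneg
  change _ ≤ γ * dist h h'
  rw [dist_pi_le_iff hKd]
  intro s
  have hq : ∀ a, |qval γ P r' h s a - qval γ P r' h' s a| ≤ γ * dist h h' := by
    intro a
    have hc : qval γ P r' h s a - qval γ P r' h' s a
        = γ * ((∑ s', P (s, a, s') * h s') - ∑ s', P (s, a, s') * h' s') := by
      unfold qval; ring
    have hc2 : (∑ s', P (s, a, s') * h s') - (∑ s', P (s, a, s') * h' s')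
        = ∑ s', P (s, a, s') * (h s' - h' s') := by
      rw [← Finset.sum_sub_distrib]
      exact Finset.sum_congr rfl fun s' _ => by ring
    rw [hc, hc2, abs_mul, abs_of_nonneg hγ0]
    apply mul_le_mul_of_nonneg_left _ hγ0
    calc |∑ s', P (s, a, s') * (h s' - h' s')| ≤ ∑ s', |P (s, a, s') * (h s' - h' s')| :=
          Finset.abs_sum_le_sum_abs _ _
      _ ≤ ∑ s', P (s, a, s') * dist h h' := by
          apply Finset.sum_le_sum
          intro s' _
          rw [abs_mul, abs_of_nonneg (hP.1 s a s')]
          apply mul_le_mul_of_nonneg_left _ (hP.1 s a s')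
          rw [← Real.dist_eq]
          exact dist_le_pi_dist h h' s'
      _ = dist h h' := by rw [← Finset.sum_mul, hP.2 s a, one_mul]
  rw [Real.dist_eq, abs_sub_le_iff]
  constructor
  · apply sub_le_iff_le_add.mpr
    apply Finset.sup'_le
    intro a _
    calc qval γ P r' h s a ≤ qval γ P r' h' s a + γ * dist h h' := by
          have := hq a; rw [abs_sub_le_iff] at this; linarith [this.1]
      _ ≤ γ * dist h h' + bellman γ P r' h' s := by
          linarith [qval_le_bellman γ P r' h' s a]
  · apply sub_le_iff_le_add.mpr
    apply Finset.sup'_le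
    intro a _
    calc qval γ P r' h' s a ≤ qval γ P r' h s a + γ * dist h h' := by
          have := hq a; rw [abs_sub_le_iff] at this; linarith [this.2]
      _ ≤ γ * dist h h' + bellman γ P r' h s := by
          linarith [qval_le_bellman γ P r' h s a]

lemma exists_bellman_fixed (γ : ℝ) (hγ0 : 0 ≤ γ) (hγ1 : γ < 1)
    (P : EuclideanSpace ℝ (S × A × S)) (hP : IsTransition P) (r' : S × A → ℝ)
    [Nonempty S] :
    ∃ h : S → ℝ, bellman γ P r' h = h := by
  have hc : ContractingWith ⟨γ, hγ0⟩ (bellman γ P r') :=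
    ⟨by exact_mod_cast hγ1, bellman_lipschitz γ hγ0 P hP r'⟩
  exact ⟨hc.fixedPoint (bellman γ P r'), hc.fixedPoint_isFixedPt⟩

end Bellman
section VI
variable {S A : Type*} [Fintype S] [Fintype A]
variable {γ : ℝ} {ρ : S → ℝ} {P : EuclideanSpace ℝ (S × A × S)}

lemma feasible_combo {d d' : EuclideanSpace ℝ (S × A)}
    (hd : Feasible γ ρ P d) (hd' : Feasible γ ρ P d') {θ : ℝ} (h0 : 0 ≤ θ) (h1 : θ ≤ 1) :
    Feasible γ ρ P (WithLp.toLp 2 (fun p => d p + θ * (d' p - d p))) := by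
  constructor
  · intro s a
    show 0 ≤ d (s, a) + θ * (d' (s, a) - d (s, a))
    have h2 := hd.1 s a; have h3 := hd'.1 s a
    nlinarith
  · intro s
    show (∑ a, (d (s, a) + θ * (d' (s, a) - d (s, a)))) = _
    have e1 : (∑ a, (d (s, a) + θ * (d' (s, a) - d (s, a))))
        = (∑ a, d (s, a)) + θ * ((∑ a, d' (s, a)) - ∑ a, d (s, a)) := by
      rw [Finset.sum_add_distrib, ← Finset.mul_sum, Finset.sum_sub_distrib]
    have e2 : (∑ s', ∑ a, (d (s', a) + θ * (d' (s', a) - d (s', a))) * P (s', a, s))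
        = (∑ s', ∑ a, d (s', a) * P (s', a, s))
          + θ * ((∑ s', ∑ a, d' (s', a) * P (s', a, s))
            - ∑ s', ∑ a, d (s', a) * P (s', a, s)) := by
      have pt : ∀ s' a, (d (s', a) + θ * (d' (s', a) - d (s', a))) * P (s', a, s)
          = d (s', a) * P (s', a, s)
            + θ * (d' (s', a) * P (s', a, s) - d (s', a) * P (s', a, s)) :=
        fun s' a => by ring
      simp only [pt, Finset.sum_add_distrib, ← Finset.mul_sum, Finset.sum_sub_distrib]
    rw [e1, e2, hd.2 s, hd'.2 s]
    ring

lemma vi {lam : ℝ} (hlam : 0 < lam) {r dstar dg : EuclideanSpace ℝ (S × A)}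
    (hdstar : Feasible γ ρ P dstar) (hdg : Feasible γ ρ P dg)
    (hmax : ∀ d : EuclideanSpace ℝ (S × A), Feasible γ ρ P d →
      RegObj lam r d ≤ RegObj lam r dstar) :
    ∑ p : S × A, (r p - lam * dstar p) * (dg p - dstar p) ≤ 0 := by
  have hsplit : ∀ (a b c : S × A → ℝ) (x y : ℝ),
      ∑ p : S × A, (a p + x * b p - y * c p)
        = (∑ p, a p) + x * (∑ p, b p) - y * (∑ p, c p) := by
    intro a b c x y
    rw [Finset.sum_sub_distrib, Finset.sum_add_distrib, ← Finset.mul_sum, ← Finset.mul_sum]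
  set u : S × A → ℝ := fun p => dg p - dstar p with hu
  set δ : ℝ := ∑ p : S × A, (r p - lam * dstar p) * u p with hδ
  set K : ℝ := lam / 2 * ∑ p : S × A, (u p) ^ 2 with hK
  have hK0 : 0 ≤ K := by
    rw [hK]
    exact mul_nonneg (by linarith) (Finset.sum_nonneg fun p _ => sq_nonneg _)
  have expand : ∀ θ : ℝ, RegObj lam r (WithLp.toLp 2 (fun p => dstar p + θ * u p))
      = RegObj lam r dstar + θ * δ - θ ^ 2 * K := by
    intro θ
    unfold RegObj
    rw [norm_sq_eq_sum, norm_sq_eq_sum]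
    have lhs' : (∑ p : S × A, r p * ((fun p => dstar p + θ * u p) p))
          - lam / 2 * ∑ p : S × A, ((fun p => dstar p + θ * u p) p) ^ 2
        = ∑ p : S × A, ((r p * dstar p - lam / 2 * (dstar p) ^ 2)
            + θ * ((r p - lam * dstar p) * u p) - θ ^ 2 * (lam / 2 * (u p) ^ 2)) := by
      rw [Finset.mul_sum, ← Finset.sum_sub_distrib]
      apply Finset.sum_congr rfl; intro p _; ring
    rw [lhs', hsplit]
    have hA : ∑ p : S × A, (r p * dstar p - lam / 2 * (dstar p) ^ 2)
        = (∑ p : S × A, r p * dstar p) - lam / 2 * ∑ p : S × A, (dstar p) ^ 2 := by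
      rw [Finset.sum_sub_distrib, ← Finset.mul_sum]
    have hC : ∑ p : S × A, (lam / 2 * (u p) ^ 2) = lam / 2 * ∑ p : S × A, (u p) ^ 2 :=
      (Finset.mul_sum _ _ _).symm
    rw [hA, hC, hδ, hK]
  have hθle : ∀ θ : ℝ, 0 < θ → θ ≤ 1 → δ ≤ θ * K := by
    intro θ hθ0 hθ1
    have hfeas := feasible_combo hdstar hdg (le_of_lt hθ0) hθ1
    have hle := hmax _ hfeas
    rw [expand θ] at hle
    have h2 : θ * δ ≤ θ * (θ * K) := by nlinarith
    exact (mul_le_mul_iff_right₀ hθ0).mp h2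
  by_contra hcon
  push_neg at hcon
  rcases eq_or_lt_of_le hK0 with hK1 | hK1
  · have := hθle 1 one_pos le_rfl
    rw [← hK1] at this
    linarith
  · have hθ2 := hθle (min 1 (δ / (2 * K)))
      (lt_min one_pos (by positivity)) (min_le_left _ _)
    have hm : min 1 (δ / (2 * K)) * K ≤ (δ / (2 * K)) * K :=
      mul_le_mul_of_nonneg_right (min_le_right _ _) hK0
    have h3 : (δ / (2 * K)) * K = δ / 2 := by field_simp
    linarith

end VI
/-- strong duality, with both optima attained:
`max_{d ∈ C(P)} (r·d − (λ/2)‖d‖²) = min_h max_{d ≥ 0} L_{r,P,λ}(d,h)`. -/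
theorem regularized_rl_strong_duality
    {S A : Type*} [Fintype S] [Fintype A] [Nonempty S] [Nonempty A]
    (γ : ℝ) (hγ0 : 0 ≤ γ) (hγ1 : γ < 1)
    (ρ : S → ℝ) (hρ0 : ∀ s, 0 ≤ ρ s) (hρ1 : (∑ s, ρ s) = 1)
    (P : EuclideanSpace ℝ (S × A × S)) (hP : IsTransition P)
    (r : EuclideanSpace ℝ (S × A))
    (lam : ℝ) (hlam : 0 < lam) :
    ∃ (dstar : EuclideanSpace ℝ (S × A)) (hstar : EuclideanSpace ℝ S),
      Feasible γ ρ P dstar ∧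
      (∀ d : EuclideanSpace ℝ (S × A), Feasible γ ρ P d →
        RegObj lam r d ≤ RegObj lam r dstar) ∧
      (∀ h : EuclideanSpace ℝ S, DualFn γ ρ r P lam hstar ≤ DualFn γ ρ r P lam h) ∧
      RegObj lam r dstar = DualFn γ ρ r P lam hstar := by
  classical
  -- primal maximizer
  obtain ⟨dstar, hdstarF, hmaxOn⟩ :=
    (feasible_isCompact γ hγ0 hγ1 ρ hρ1 P hP).exists_isMaxOn
      ⟨occD γ ρ P (fun _ => Classical.arbitrary A),
        occD_feasible hγ0 hγ1 hρ0 hρ1 hP⟩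
      ((regObj_continuous lam r).continuousOn)
  have hmax : ∀ d : EuclideanSpace ℝ (S × A), Feasible γ ρ P d →
      RegObj lam r d ≤ RegObj lam r dstar := fun d hd => hmaxOn hd
  -- the modified reward
  set r' : S × A → ℝ := fun p => r p - lam * dstar p with hr'
  -- dual variable: fixed point of the Bellman operator for reward r'
  obtain ⟨hst, hfix⟩ : ∃ h : EuclideanSpace ℝ S, bellman γ P r' h = h := by
    obtain ⟨h0, hh⟩ := exists_bellman_fixed γ hγ0 hγ1 P hP r'
    exact ⟨WithLp.toLp 2 h0, hh⟩
  -- greedy policy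
  choose π hπ using fun s => exists_bellman_argmax γ P r' hst s
  set dg : EuclideanSpace ℝ (S × A) := occD γ ρ P π with hdgdef
  have hdgF : Feasible γ ρ P dg := occD_feasible hγ0 hγ1 hρ0 hρ1 hP
  -- basic facts about hst
  have hub : ∀ s a, qval γ P r' hst s a ≤ hst s := by
    intro s a
    rw [← congrFun hfix s]
    exact qval_le_bellman γ P r' hst s a
  have heq : ∀ s, hst s = qval γ P r' hst s (π s) := by
    intro s
    rw [← congrFun hfix s]
    exact hπ s
  -- gap function
  set G : S × A → ℝ := fun p => hst p.1 - qval γ P r' hst p.1 p.2 with hGdef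
  have hG0 : ∀ p, 0 ≤ G p := fun p => sub_nonneg.mpr (hub p.1 p.2)
  -- cvec in terms of the gap
  have hcv : ∀ p : S × A, cvec γ P r hst p = lam * dstar p - G p := by
    rintro ⟨s, a⟩
    show r (s, a) + γ * (∑ s', P (s, a, s') * hst s') - hst s
      = lam * dstar (s, a) - (hst s - qval γ P r' hst s a)
    unfold qval
    simp only [hr']
    ring
  -- pairing identities
  have hpair_g := pairing γ ρ r P lam hdgF hst
  have hpair_s := pairing γ ρ r P lam hdstarF hst
  -- the gap vanishes on the support of dg
  have hGg : ∀ p : S × A, G p * dg p = 0 := by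
    rintro ⟨s, a⟩
    by_cases hc : a = π s
    · subst hc
      have hz : G (s, π s) = 0 := by
        show hst s - qval γ P r' hst s (π s) = 0
        exact sub_eq_zero.mpr (heq s)
      rw [hz, zero_mul]
    · have hz : dg (s, a) = 0 := by
        rw [hdgdef]
        unfold occD
        simp [hc]
      rw [hz, mul_zero]
  -- abbreviation for the constant term
  set Sρ : ℝ := ∑ s, hst s * ρ s with hSρ
  -- (F1) Sρ = r·dg − λ⟨dstar,dg⟩
  have e_g : ∀ p : S × A, cvec γ P r hst p * dg p = lam * (dstar p * dg p) := by
    intro p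
    rw [hcv p, sub_mul, hGg p, sub_zero]
    ring
  have hF1 : Sρ = (∑ p : S × A, r p * dg p) - lam * ∑ p : S × A, dstar p * dg p := by
    have h1 : ∑ p : S × A, cvec γ P r hst p * dg p
        = lam * ∑ p : S × A, dstar p * dg p := by
      rw [Finset.sum_congr rfl fun p _ => e_g p, ← Finset.mul_sum]
    rw [h1] at hpair_g
    linarith
  -- (F2) λ‖dstar‖² − ∑ G dstar = r·dstar − Sρ
  have e_s : ∀ p : S × A, cvec γ P r hst p * dstar p
      = lam * (dstar p) ^ 2 - G p * dstar p := by
    intro p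
    rw [hcv p]
    ring
  have hF2 : lam * (∑ p : S × A, (dstar p) ^ 2) - (∑ p : S × A, G p * dstar p)
      = (∑ p : S × A, r p * dstar p) - Sρ := by
    have h1 : ∑ p : S × A, cvec γ P r hst p * dstar p
        = lam * (∑ p : S × A, (dstar p) ^ 2) - ∑ p : S × A, G p * dstar p := by
      rw [Finset.sum_congr rfl fun p _ => e_s p, Finset.sum_sub_distrib, ← Finset.mul_sum]
    rw [h1] at hpair_s
    linarith
  -- (F3) variational inequality
  have hVI := vi hlam hdstarF hdgF hmax
  have hVIexp : ∑ p : S × A, (r p - lam * dstar p) * (dg p - dstar p)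
      = (∑ p : S × A, r p * dg p) - (∑ p : S × A, r p * dstar p)
        - (lam * ∑ p : S × A, dstar p * dg p - lam * ∑ p : S × A, (dstar p) ^ 2) := by
    have pt : ∀ p : S × A, (r p - lam * dstar p) * (dg p - dstar p)
        = r p * dg p - r p * dstar p - (lam * (dstar p * dg p) - lam * (dstar p) ^ 2) :=
      fun p => by ring
    simp only [pt, Finset.sum_sub_distrib, ← Finset.mul_sum]
  rw [hVIexp] at hVI
  -- (F4) ∑ G dstar ≤ 0 hence = 0, hence pointwise zero
  have hGd_zero : ∀ p : S × A, G p * dstar p = 0 := by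
    have hle : ∑ p : S × A, G p * dstar p ≤ 0 := by linarith
    have hge : ∀ p ∈ (Finset.univ : Finset (S × A)), 0 ≤ G p * dstar p :=
      fun p _ => mul_nonneg (hG0 p) (hdstarF.1 p.1 p.2)
    have hzero : ∑ p : S × A, G p * dstar p = 0 :=
      le_antisymm hle (Finset.sum_nonneg hge)
    intro p
    exact (Finset.sum_eq_zero_iff_of_nonneg hge).mp hzero p (Finset.mem_univ p)
  -- (F6) complementary slackness for the quadratic terms
  have hqcs : ∀ p : S × A, cvec γ P r hst p * dstar p - lam / 2 * (dstar p) ^ 2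
      = max 0 (cvec γ P r hst p) ^ 2 / (2 * lam) := by
    intro p
    apply quad_eq_of_cs hlam _ (hdstarF.1 p.1 p.2)
    rcases mul_eq_zero.mp (hGd_zero p) with hzg | hzd
    · right
      rw [hcv p, hzg, sub_zero]
    · left
      refine ⟨hzd, ?_⟩
      rw [hcv p, hzd, mul_zero, zero_sub]
      linarith [hG0 p]
  -- (F7) the dual bound is attained at dstar
  have hbound_eq : (∑ p : S × A, max 0 (cvec γ P r hst p) ^ 2 / (2 * lam)) + Sρ
      = Lag γ ρ r P lam dstar hst := by
    rw [Lag_eq, norm_sq_eq_sum]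
    have h1 : (∑ p : S × A, cvec γ P r hst p * dstar p)
          - lam / 2 * ∑ p : S × A, (dstar p) ^ 2
        = ∑ p : S × A, (cvec γ P r hst p * dstar p - lam / 2 * (dstar p) ^ 2) := by
      rw [Finset.sum_sub_distrib, Finset.mul_sum]
    rw [h1, Finset.sum_congr rfl fun p _ => hqcs p]
  -- (F8) DualFn at hst equals RegObj at dstar
  haveI : Nonempty {d : EuclideanSpace ℝ (S × A) // ∀ p, 0 ≤ d p} :=
    ⟨⟨0, fun p => le_rfl⟩⟩
  have hd_le : DualFn γ ρ r P lam hst ≤ RegObj lam r dstar := by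
    unfold DualFn
    apply ciSup_le
    intro d
    calc Lag γ ρ r P lam d.1 hst
        ≤ (∑ p : S × A, max 0 (cvec γ P r hst p) ^ 2 / (2 * lam)) + Sρ :=
          Lag_le_bound γ ρ r P hlam hst d.1 d.2
      _ = Lag γ ρ r P lam dstar hst := hbound_eq
      _ = RegObj lam r dstar := Lag_of_feasible γ ρ r P lam hdstarF hst
  have hd_ge : RegObj lam r dstar ≤ DualFn γ ρ r P lam hst :=
    regObj_le_dualFn γ ρ r P hlam hdstarF hst
  have hdd : RegObj lam r dstar = DualFn γ ρ r P lam hst := le_antisymm hd_ge hd_le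
  refine ⟨dstar, hst, hdstarF, hmax, ?_, hdd⟩
  intro h
  rw [← hdd]
  exact regObj_le_dualFn γ ρ r P hlam hdstarF h
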